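/- Let m = 4, κ_2(x_1,x_2,x_3,x_4) = x_1 ∧ ((¬x_2 ∧ x_3 ∧ x_4) ∨ (x_2 ∧ x_3) ∨ (x_2 ∧ ¬x_3 ∧ ¬x_4)), and v = (1,0,0,0), so c = κ_2(v) = 0. Then feature 1 is irrelevant (belongs to no AXp) while feature 4 is relevant (belongs to some AXp), yet Sv(1) = 1/8 ≠ 0 and Sv(4) = 0 (a second witness to issue I4). -/
import Mathlib


/-- The set of points agreeing with `v` on all features in `S`. -/
def upsilon {m : ℕ} (v : Fin m → Bool) (S : Finset (Fin m)) : Set (Fin m → Bool) :=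
  {x | ∀ i ∈ S, x i = v i}

/-- Weak abductive explanation: fixing the features in `S` to their values in `v`
forces the prediction to remain `κ v`. -/
def WAXp {m : ℕ} (κ : (Fin m → Bool) → Bool) (v : Fin m → Bool) (S : Finset (Fin m)) : Prop :=
  ∀ x ∈ upsilon v S, κ x = κ v

/-- Abductive explanation: a subset-minimal weak AXp. -/
def AXp {m : ℕ} (κ : (Fin m → Bool) → Bool) (v : Fin m → Bool) (S : Finset (Fin m)) : Prop :=
  WAXp κ v S ∧ ∀ T ⊂ S, ¬ WAXp κ v T

/-- Weak contrastive explanation: freeing the features in `S` (fixing all others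
to their values in `v`) allows the prediction to change. -/
def WCXp {m : ℕ} (κ : (Fin m → Bool) → Bool) (v : Fin m → Bool) (S : Finset (Fin m)) : Prop :=
  ∃ x : Fin m → Bool, (∀ i ∉ S, x i = v i) ∧ κ x ≠ κ v

/-- Contrastive explanation: a subset-minimal weak CXp. -/
def CXp {m : ℕ} (κ : (Fin m → Bool) → Bool) (v : Fin m → Bool) (S : Finset (Fin m)) : Prop :=
  WCXp κ v S ∧ ∀ T ⊂ S, ¬ WCXp κ v T

/-- A feature is relevant if it belongs to some AXp. -/
def Relevant {m : ℕ} (κ : (Fin m → Bool) → Bool) (v : Fin m → Bool) (i : Fin m) : Prop :=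
  ∃ S, AXp κ v S ∧ i ∈ S

/-- The sufficiency function `σ`: `σ s = true` iff fixing exactly the features
selected by `s` to their values in `v` forces the prediction `κ v` everywhere. -/
def sigmaFn {m : ℕ} (κ : (Fin m → Bool) → Bool) (v : Fin m → Bool) (s : Fin m → Bool) : Bool :=
  decide (∀ x : Fin m → Bool, (∀ i : Fin m, s i = true → x i = v i) → κ x = κ v)

/-- Average value of the classifier over the points agreeing with `v` on `S`. -/
def phi {m : ℕ} (κ : (Fin m → Bool) → Bool) (v : Fin m → Bool) (S : Finset (Fin m)) : ℚ :=
  (1 / 2 ^ (m - S.card)) *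
    ∑ x ∈ Finset.univ.filter (fun x : Fin m → Bool => ∀ i ∈ S, x i = v i),
      (if κ x = true then (1 : ℚ) else 0)

/-- The Shapley value of feature `i` for the instance `(v, κ v)`. -/
def Sv {m : ℕ} (κ : (Fin m → Bool) → Bool) (v : Fin m → Bool) (i : Fin m) : ℚ :=
  ∑ S ∈ (Finset.univ.erase i).powerset,
    ((S.card.factorial : ℚ) * ((m - S.card - 1).factorial : ℚ) / (m.factorial : ℚ)) *
      (phi κ v (insert i S) - phi κ v S)

/-- The classifier κ₂(x₁,x₂,x₃,x₄) = x₁ ∧ ((¬x₂ ∧ x₃ ∧ x₄) ∨ (x₂ ∧ x₃) ∨ (x₂ ∧ ¬x₃ ∧ ¬x₄))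
(features are 0-indexed). -/
def kappa2 : (Fin 4 → Bool) → Bool := fun x =>
  x 0 && ((!(x 1) && x 2 && x 3) || (x 1 && x 2) || (x 1 && !(x 2) && !(x 3)))

/-- The point v = (1,0,0,0). -/
def v1000 : Fin 4 → Bool := ![true, false, false, false]


lemma phi_eq {m : ℕ} (κ : (Fin m → Bool) → Bool) (v : Fin m → Bool) (S : Finset (Fin m)) (n : ℕ)
    (h : (Finset.univ.filter
        (fun x : Fin m → Bool => (∀ i ∈ S, x i = v i) ∧ κ x = true)).card = n) :
    phi κ v S = (n : ℚ) / 2 ^ (m - S.card) := by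
  rw [phi, Finset.sum_boole, Finset.filter_filter, h]
  ring

theorem stmt14 :
    kappa2 v1000 = false ∧
    ¬ Relevant kappa2 v1000 0 ∧
    Relevant kappa2 v1000 3 ∧
    Sv kappa2 v1000 0 = 1 / 8 ∧
    Sv kappa2 v1000 0 ≠ 0 ∧
    Sv kappa2 v1000 3 = 0 := by
  have hSv0 : Sv kappa2 v1000 0 = 1 / 8 := by
    have hp : (Finset.univ.erase (0:Fin 4)).powerset =
        ({∅, {1}, {2}, {3}, {1, 2}, {1, 3}, {2, 3}, {1, 2, 3}} : Finset (Finset (Fin 4))) := by decide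
    simp only [Sv, hp]
    rw [Finset.sum_insert (by decide), Finset.sum_insert (by decide), Finset.sum_insert (by decide), Finset.sum_insert (by decide), Finset.sum_insert (by decide), Finset.sum_insert (by decide), Finset.sum_insert (by decide),
      Finset.sum_singleton]
    rw [phi_eq kappa2 v1000 ∅ 4 (by decide),
      phi_eq kappa2 v1000 (insert 0 ∅) 4 (by decide),
      phi_eq kappa2 v1000 {1} 1 (by decide),
      phi_eq kappa2 v1000 (insert 0 {1}) 1 (by decide),
      phi_eq kappa2 v1000 {2} 1 (by decide),
      phi_eq kappa2 v1000 (insert 0 {2}) 1 (by decide),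
      phi_eq kappa2 v1000 {3} 2 (by decide),
      phi_eq kappa2 v1000 (insert 0 {3}) 2 (by decide),
      phi_eq kappa2 v1000 {1, 2} 0 (by decide),
      phi_eq kappa2 v1000 (insert 0 {1, 2}) 0 (by decide),
      phi_eq kappa2 v1000 {1, 3} 0 (by decide),
      phi_eq kappa2 v1000 (insert 0 {1, 3}) 0 (by decide),
      phi_eq kappa2 v1000 {2, 3} 1 (by decide),
      phi_eq kappa2 v1000 (insert 0 {2, 3}) 1 (by decide),
      phi_eq kappa2 v1000 {1, 2, 3} 0 (by decide),
      phi_eq kappa2 v1000 (insert 0 {1, 2, 3}) 0 (by decide)]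
    simp only [show (∅ : Finset (Fin 4)).card = 0 from by decide,
      show ((insert 0 ∅ : Finset (Fin 4))).card = 1 from by decide,
      show ({1} : Finset (Fin 4)).card = 1 from by decide,
      show ((insert 0 {1} : Finset (Fin 4))).card = 2 from by decide,
      show ({2} : Finset (Fin 4)).card = 1 from by decide,
      show ((insert 0 {2} : Finset (Fin 4))).card = 2 from by decide,
      show ({3} : Finset (Fin 4)).card = 1 from by decide,
      show ((insert 0 {3} : Finset (Fin 4))).card = 2 from by decide,
      show ({1, 2} : Finset (Fin 4)).card = 2 from by decide,
      show ((insert 0 {1, 2} : Finset (Fin 4))).card = 3 from by decide,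
      show ({1, 3} : Finset (Fin 4)).card = 2 from by decide,
      show ((insert 0 {1, 3} : Finset (Fin 4))).card = 3 from by decide,
      show ({2, 3} : Finset (Fin 4)).card = 2 from by decide,
      show ((insert 0 {2, 3} : Finset (Fin 4))).card = 3 from by decide,
      show ({1, 2, 3} : Finset (Fin 4)).card = 3 from by decide,
      show ((insert 0 {1, 2, 3} : Finset (Fin 4))).card = 4 from by decide]
    norm_num [Nat.factorial]
  have hSv3 : Sv kappa2 v1000 3 = 0 := by
    have hp : (Finset.univ.erase (3:Fin 4)).powerset =
        ({∅, {0}, {1}, {2}, {0, 1}, {0, 2}, {1, 2}, {0, 1, 2}} : Finset (Finset (Fin 4))) := by decide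
    simp only [Sv, hp]
    rw [Finset.sum_insert (by decide), Finset.sum_insert (by decide), Finset.sum_insert (by decide), Finset.sum_insert (by decide), Finset.sum_insert (by decide), Finset.sum_insert (by decide), Finset.sum_insert (by decide),
      Finset.sum_singleton]
    rw [phi_eq kappa2 v1000 ∅ 4 (by decide),
      phi_eq kappa2 v1000 (insert 3 ∅) 2 (by decide),
      phi_eq kappa2 v1000 {0} 4 (by decide),
      phi_eq kappa2 v1000 (insert 3 {0}) 2 (by decide),
      phi_eq kappa2 v1000 {1} 1 (by decide),
      phi_eq kappa2 v1000 (insert 3 {1}) 0 (by decide),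
      phi_eq kappa2 v1000 {2} 1 (by decide),
      phi_eq kappa2 v1000 (insert 3 {2}) 1 (by decide),
      phi_eq kappa2 v1000 {0, 1} 1 (by decide),
      phi_eq kappa2 v1000 (insert 3 {0, 1}) 0 (by decide),
      phi_eq kappa2 v1000 {0, 2} 1 (by decide),
      phi_eq kappa2 v1000 (insert 3 {0, 2}) 1 (by decide),
      phi_eq kappa2 v1000 {1, 2} 0 (by decide),
      phi_eq kappa2 v1000 (insert 3 {1, 2}) 0 (by decide),
      phi_eq kappa2 v1000 {0, 1, 2} 0 (by decide),
      phi_eq kappa2 v1000 (insert 3 {0, 1, 2}) 0 (by decide)]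
    simp only [show (∅ : Finset (Fin 4)).card = 0 from by decide,
      show ((insert 3 ∅ : Finset (Fin 4))).card = 1 from by decide,
      show ({0} : Finset (Fin 4)).card = 1 from by decide,
      show ((insert 3 {0} : Finset (Fin 4))).card = 2 from by decide,
      show ({1} : Finset (Fin 4)).card = 1 from by decide,
      show ((insert 3 {1} : Finset (Fin 4))).card = 2 from by decide,
      show ({2} : Finset (Fin 4)).card = 1 from by decide,
      show ((insert 3 {2} : Finset (Fin 4))).card = 2 from by decide,
      show ({0, 1} : Finset (Fin 4)).card = 2 from by decide,
      show ((insert 3 {0, 1} : Finset (Fin 4))).card = 3 from by decide,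
      show ({0, 2} : Finset (Fin 4)).card = 2 from by decide,
      show ((insert 3 {0, 2} : Finset (Fin 4))).card = 3 from by decide,
      show ({1, 2} : Finset (Fin 4)).card = 2 from by decide,
      show ((insert 3 {1, 2} : Finset (Fin 4))).card = 3 from by decide,
      show ({0, 1, 2} : Finset (Fin 4)).card = 3 from by decide,
      show ((insert 3 {0, 1, 2} : Finset (Fin 4))).card = 4 from by decide]
    norm_num [Nat.factorial]
  refine ⟨by decide, ?_, ?_, hSv0, by rw [hSv0]; norm_num, hSv3⟩
  · simp only [Relevant, AXp, WAXp, upsilon, Set.mem_setOf_eq]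
    decide
  · simp only [Relevant, AXp, WAXp, upsilon, Set.mem_setOf_eq]
    decide
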